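/- Condition-number form of the relative perturbation bound: let A, E, B, X, Y be n×n quaternion matrices with B = A + E. Assume X is a k-Drazin inverse of A, Y is an m-Drazin inverse of B, E = (A * X) * E * (A * X), 1 + X * E is a unit of the matrix ring, ‖(1 + X * E)⁻¹‖₂ ≤ 1 / (1 - ‖X * E‖₂), and ‖X‖₂ * ‖E‖₂ < 1. Then ‖Y - X‖₂ ≤ ‖X‖₂ * (‖X‖₂ * ‖E‖₂) / (1 - ‖X‖₂ * ‖E‖₂); equivalently, writing κ = ‖A‖₂ * ‖X‖₂ and assuming ‖A‖₂ > 0, the relative error ‖Y - X‖₂ / ‖X‖₂ is at most (κ * ‖E‖₂ / ‖A‖₂) / (1 - κ * ‖E‖₂ / ‖A‖₂). -/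

import Mathlib

noncomputable section

notation "ℍ" => Quaternion ℝ

/-- The bounded ℝ-linear map `x ↦ M.mulVec x` between `PiLp 2` spaces of quaternion
vectors. -/
def mulVecCLM {m n : ℕ} (M : Matrix (Fin m) (Fin n) ℍ) :
    PiLp 2 (fun _ : Fin n => ℍ) →L[ℝ] PiLp 2 (fun _ : Fin m => ℍ) :=
  LinearMap.toContinuousLinearMap
    { toFun := fun x => WithLp.toLp 2 (M.mulVec x)
      map_add' := fun x y => by simp [Matrix.mulVec_add]
      map_smul' := fun r x => by simp [Matrix.mulVec_smul] }

/-- The spectral norm of a quaternion matrix: the operator norm of `x ↦ M.mulVec x`. -/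
def specNorm {m n : ℕ} (M : Matrix (Fin m) (Fin n) ℍ) : ℝ := ‖mulVecCLM M‖

/-- `X` is a `k`-Drazin inverse of the square quaternion matrix `A`. -/
def IsDrazinInverse {n : ℕ} (A X : Matrix (Fin n) (Fin n) ℍ) (k : ℕ) : Prop :=
  A ^ k * X * A = A ^ k ∧ X * A * X = X ∧ A * X = X * A


theorem specNorm_nonneg' {m n : ℕ} (M : Matrix (Fin m) (Fin n) ℍ) : 0 ≤ specNorm M := by
  unfold specNorm; exact norm_nonneg (mulVecCLM M)

theorem specNorm_neg' {m n : ℕ} (M : Matrix (Fin m) (Fin n) ℍ) : specNorm (-M) = specNorm M := by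
  have h : mulVecCLM (-M) = -(mulVecCLM M) := by
    refine ContinuousLinearMap.ext fun x => PiLp.ext fun i => ?_
    simp [mulVecCLM, Matrix.neg_mulVec]
  simp only [specNorm, h]
  exact norm_neg (mulVecCLM M)

theorem specNorm_mul_le' {l m n : ℕ} (M : Matrix (Fin l) (Fin m) ℍ) (N : Matrix (Fin m) (Fin n) ℍ) :
    specNorm (M * N) ≤ specNorm M * specNorm N := by
  have h : mulVecCLM (M * N) = (mulVecCLM M).comp (mulVecCLM N) := by
    refine ContinuousLinearMap.ext fun x => PiLp.ext fun i => ?_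
    simp [mulVecCLM, ← Matrix.mulVec_mulVec]
  simp only [specNorm, h]
  exact ContinuousLinearMap.opNorm_comp_le _ _


private theorem idemPowAux {R : Type*} [Ring R] {p : R} (hp : p * p = p) : ∀ N, p ^ (N + 1) = p
  | 0 => pow_one p
  | N + 1 => by rw [pow_succ, idemPowAux hp N, hp]

private theorem drazinXEq {R : Type*} [Ring R] {a x : R} (h2 : x * a * x = x) (h3 : a * x = x * a) (N : ℕ) :
    x = a ^ N * x ^ (N + 1) := by
  have hc : Commute a x := h3
  have key : ∀ j, x * (a * x) ^ j = x := by
    intro j; induction j with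
    | zero => simp
    | succ j ih => rw [pow_succ, ← mul_assoc, ih, ← mul_assoc, h2]
  calc x = x * (a * x) ^ N := (key N).symm
    _ = x * (a ^ N * x ^ N) := by rw [hc.mul_pow]
    _ = (x * a ^ N) * x ^ N := by rw [mul_assoc]
    _ = (a ^ N * x) * x ^ N := by rw [← (hc.pow_left N).eq]
    _ = a ^ N * x ^ (N + 1) := by rw [mul_assoc, ← pow_succ']

private theorem drazinUnique' {R : Type*} [Ring R] {a x y : R} {k m : ℕ}
    (hx1 : a ^ k * x * a = a ^ k) (hx2 : x * a * x = x) (hx3 : a * x = x * a)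
    (hy1 : a ^ m * y * a = a ^ m) (hy2 : y * a * y = y) (hy3 : a * y = y * a) :
    x = y := by
  set N := max k m with hN
  have hcx : Commute a x := hx3
  have hcy : Commute a y := hy3
  have haNx : a ^ N * x * a = a ^ N := by
    have hsplit : a ^ N = a ^ (N - k) * a ^ k := by
      rw [← pow_add, Nat.sub_add_cancel (le_max_left k m)]
    rw [hsplit, mul_assoc (a ^ (N - k)), mul_assoc (a ^ (N - k)), hx1]
  have haNy : a ^ N * y * a = a ^ N := by
    have hsplit : a ^ N = a ^ (N - m) * a ^ m := by
      rw [← pow_add, Nat.sub_add_cancel (le_max_right k m)]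
    rw [hsplit, mul_assoc (a ^ (N - m)), mul_assoc (a ^ (N - m)), hy1]
  have hax : (a * x) * (a * x) = a * x := by
    rw [mul_assoc, ← mul_assoc x a x, hx2]
  have hya : (y * a) * (y * a) = y * a := by
    rw [← mul_assoc, hy2]
  have h1 : x = y * (a * x) := by
    have e1 : y * a ^ (N + 1) = a ^ N := by
      calc y * a ^ (N + 1) = y * (a ^ N * a) := by rw [pow_succ]
        _ = (y * a ^ N) * a := by rw [mul_assoc]
        _ = (a ^ N * y) * a := by rw [← (hcy.pow_left N).eq]
        _ = a ^ N := haNy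
    calc x = a ^ N * x ^ (N + 1) := drazinXEq hx2 hx3 N
      _ = (y * a ^ (N + 1)) * x ^ (N + 1) := by rw [e1]
      _ = y * (a ^ (N + 1) * x ^ (N + 1)) := by rw [mul_assoc]
      _ = y * (a * x) ^ (N + 1) := by rw [hcx.mul_pow]
      _ = y * (a * x) := by rw [idemPowAux hax N]
  have h2 : y = (y * a) * x := by
    have e2 : a ^ (N + 1) * x = a ^ N := by
      calc a ^ (N + 1) * x = (a ^ N * a) * x := by rw [pow_succ]
        _ = a ^ N * (a * x) := by rw [mul_assoc]
        _ = a ^ N * (x * a) := by rw [hx3]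
        _ = a ^ N * x * a := by rw [mul_assoc]
        _ = a ^ N := haNx
    have hcy' : Commute y a := hcy.symm
    calc y = a ^ N * y ^ (N + 1) := drazinXEq hy2 hy3 N
      _ = y ^ (N + 1) * a ^ N := (hcy.pow_pow N (N + 1)).eq
      _ = y ^ (N + 1) * (a ^ (N + 1) * x) := by rw [e2]
      _ = (y ^ (N + 1) * a ^ (N + 1)) * x := by rw [mul_assoc]
      _ = ((y * a) ^ (N + 1)) * x := by rw [hcy'.mul_pow]
      _ = (y * a) * x := by rw [idemPowAux hya N]
  rw [h1, ← mul_assoc, ← h2]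


private theorem drazinPert' {R : Type*} [Ring R] {a x e : R} {k : ℕ}
    (hx1 : a ^ k * x * a = a ^ k) (hx2 : x * a * x = x) (hx3 : a * x = x * a)
    (he : e = (a * x) * e * (a * x)) (u : Rˣ) (hu : (u : R) = 1 + x * e) :
    (a + e) ^ k * ((↑u⁻¹ : R) * x) * (a + e) = (a + e) ^ k ∧
    ((↑u⁻¹ : R) * x) * (a + e) * ((↑u⁻¹ : R) * x) = (↑u⁻¹ : R) * x ∧
    (a + e) * ((↑u⁻¹ : R) * x) = ((↑u⁻¹ : R) * x) * (a + e) := by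
  set p := a * x with hp
  have hpp : p * p = p := by rw [hp, mul_assoc, ← mul_assoc x a x, hx2]
  have hep : e * p = e := by
    conv_lhs => rw [he, mul_assoc (p * e) p p, hpp]
    exact he.symm
  have hpe : p * e = e := by
    conv_lhs => rw [he, ← mul_assoc p (p * e) p, ← mul_assoc p p e, hpp]
    exact he.symm
  have hxp : x * p = x := by rw [hp, ← mul_assoc, hx2]
  have hpx : p * x = x := by rw [hx3, hx2]
  have hxa : x * a = p := hx3.symm
  have hap : a * p = p * a := by
    conv_lhs => rw [hx3]
    rw [← mul_assoc, ← hp]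
  have hau : a * (u : R) = a + e := by
    rw [hu, mul_add, mul_one, ← mul_assoc, ← hp, hpe]
  have hcpu : Commute p (u : R) := by
    have h1 : (u : R) * p = p + x * e := by rw [hu, add_mul, one_mul, mul_assoc, hep]
    have h2 : p * (u : R) = p + x * e := by rw [hu, mul_add, mul_one, ← mul_assoc, hpx]
    exact h2.trans h1.symm
  have hcpuinv : Commute p ((u⁻¹ : Rˣ) : R) := hcpu.units_inv_right
  have key1 : (u : R) * (1 - p) = 1 - p := by
    rw [hu, add_mul, one_mul, mul_sub, mul_one, mul_assoc, hep, sub_self, add_zero]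
  have key1' : ((u⁻¹ : Rˣ) : R) * (1 - p) = 1 - p := by
    have h : ((u⁻¹ : Rˣ) : R) * ((u : R) * (1 - p)) = ((u⁻¹ : Rˣ) : R) * (1 - p) := by
      rw [key1]
    rw [← mul_assoc, Units.inv_mul, one_mul] at h
    exact h.symm
  have key1'' : ((u⁻¹ : Rˣ) : R) * (p - 1) = p - 1 := by
    rw [← neg_sub 1 p, mul_neg, key1']
  have hbz : (a + e) * ((↑u⁻¹ : R) * x) = p := by
    rw [← hau, mul_assoc, ← mul_assoc (u : R), Units.mul_inv, one_mul, ← hp]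
  have hxe : x * e = (u : R) - 1 := by rw [hu, add_sub_cancel_left]
  have hzb : ((↑u⁻¹ : R) * x) * (a + e) = p := by
    have hxb : x * (a + e) = (p - 1) + (u : R) := by
      rw [mul_add, hxe, hxa]; abel
    calc ((↑u⁻¹ : R) * x) * (a + e) = (↑u⁻¹ : R) * (x * (a + e)) := mul_assoc _ _ _
      _ = (↑u⁻¹ : R) * (p - 1) + (↑u⁻¹ : R) * (u : R) := by rw [hxb, mul_add]
      _ = (p - 1) + 1 := by rw [key1'', Units.inv_mul]
      _ = p := by abel
  have hpz : p * ((↑u⁻¹ : R) * x) = (↑u⁻¹ : R) * x := by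
    rw [← mul_assoc, hcpuinv.eq, mul_assoc, hpx]
  have hastep : a * (1 - p) = (1 - p) * a := by
    rw [mul_sub, sub_mul, mul_one, one_mul, hap]
  have hbstep : (a + e) * (1 - p) = (1 - p) * a := by
    rw [add_mul, mul_sub e 1 p, mul_one, hep, sub_self, add_zero, hastep]
  have hb1p : ∀ j, (a + e) ^ j * (1 - p) = a ^ j * (1 - p) := by
    intro j; induction j with
    | zero => simp
    | succ j ih =>
      calc (a + e) ^ (j + 1) * (1 - p) = (a + e) ^ j * ((a + e) * (1 - p)) := by
            rw [pow_succ, mul_assoc]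
        _ = ((a + e) ^ j * (1 - p)) * a := by rw [hbstep, mul_assoc]
        _ = (a ^ j * (1 - p)) * a := by rw [ih]
        _ = a ^ j * (a * (1 - p)) := by rw [mul_assoc, ← hastep]
        _ = a ^ (j + 1) * (1 - p) := by rw [← mul_assoc, ← pow_succ]
  have hak : a ^ k * (1 - p) = 0 := by
    rw [mul_sub, mul_one, hx3, ← mul_assoc, hx1, sub_self]
  have hbk0 : (a + e) ^ k * (1 - p) = 0 := (hb1p k).trans hak
  have hbp : (a + e) ^ k * p = (a + e) ^ k := by
    rw [mul_sub, mul_one, sub_eq_zero] at hbk0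
    exact hbk0.symm
  refine ⟨?_, ?_, ?_⟩
  · rw [mul_assoc, hzb, hbp]
  · rw [hzb, hpz]
  · rw [hbz, hzb]

set_option maxHeartbeats 1000000 in
/-- Condition-number form of the relative perturbation bound for the Drazin inverse,
with condition number `κ = ‖A‖₂ * ‖X‖₂`. -/
theorem drazin_perturbation_condition_number_bound {n : ℕ}
    (A E B X Y : Matrix (Fin n) (Fin n) ℍ) (k m : ℕ)
    (hB : B = A + E)
    (hX : IsDrazinInverse A X k) (hY : IsDrazinInverse B Y m)
    (hE : E = (A * X) * E * (A * X))
    (hU : IsUnit (1 + X * E))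
    (hinv : specNorm (Ring.inverse (1 + X * E)) ≤ 1 / (1 - specNorm (X * E)))
    (hsmall : specNorm X * specNorm E < 1) :
    specNorm (Y - X) ≤
      specNorm X * (specNorm X * specNorm E) / (1 - specNorm X * specNorm E) ∧
    (0 < specNorm A →
      specNorm (Y - X) / specNorm X ≤
        (specNorm A * specNorm X * specNorm E / specNorm A) /
          (1 - specNorm A * specNorm X * specNorm E / specNorm A)) := by
  obtain ⟨u, hu⟩ := hU
  obtain ⟨hX1, hX2, hX3⟩ := hX
  obtain ⟨hY1, hY2, hY3⟩ := hY
  obtain ⟨hz1, hz2, hz3⟩ := drazinPert' hX1 hX2 hX3 hE u hu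
  rw [← hB] at hz1 hz2 hz3
  -- identify Y with u⁻¹ * X
  have hYZ := (drazinUnique' hz1 hz2 hz3 hY1 hY2 hY3).symm
  have hRinv : Ring.inverse (1 + X * E) = (u⁻¹).val := by
    rw [← hu, Ring.inverse_unit]
  have h5 : u.val * X = X + X * E * X := by
    rw [hu, add_mul, one_mul]
  have hdiff : Y - X = -((Ring.inverse (1 + X * E)) * (X * E) * X) := by
    rw [hRinv]
    calc Y - X = (u⁻¹).val * X - (u⁻¹).val * (u.val * X) := by
          rw [hYZ, ← mul_assoc, Units.inv_mul, one_mul]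
      _ = (u⁻¹).val * (X - (X + X * E * X)) := by rw [← mul_sub, h5]
      _ = (u⁻¹).val * (-(X * E * X)) := by rw [sub_add_cancel_left]
      _ = -((u⁻¹).val * (X * E) * X) := by rw [mul_neg, ← mul_assoc]
  -- numeric part
  have hr0 : 0 ≤ specNorm (X * E) := specNorm_nonneg' _
  have hrt : specNorm (X * E) ≤ specNorm X * specNorm E := specNorm_mul_le' X E
  have ht0 : 0 ≤ specNorm X * specNorm E :=
    mul_nonneg (specNorm_nonneg' X) (specNorm_nonneg' E)
  have hr1 : specNorm (X * E) < 1 := lt_of_le_of_lt hrt hsmall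
  have hd : 0 < 1 - specNorm X * specNorm E := by linarith
  have hdr : 0 < 1 - specNorm (X * E) := by linarith
  have hbound : specNorm (Y - X) ≤
      specNorm X * (specNorm X * specNorm E) / (1 - specNorm X * specNorm E) := by
    calc specNorm (Y - X) = specNorm ((Ring.inverse (1 + X * E)) * (X * E) * X) := by
          rw [hdiff, specNorm_neg']
      _ ≤ specNorm ((Ring.inverse (1 + X * E)) * (X * E)) * specNorm X :=
          specNorm_mul_le' _ _
      _ ≤ (specNorm (Ring.inverse (1 + X * E)) * specNorm (X * E)) * specNorm X :=
          mul_le_mul_of_nonneg_right (specNorm_mul_le' _ _) (specNorm_nonneg' X)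
      _ ≤ ((1 / (1 - specNorm (X * E))) * specNorm (X * E)) * specNorm X :=
          mul_le_mul_of_nonneg_right (mul_le_mul_of_nonneg_right hinv hr0)
            (specNorm_nonneg' X)
      _ ≤ specNorm X * (specNorm X * specNorm E) / (1 - specNorm X * specNorm E) := by
          have h1 : specNorm (X * E) / (1 - specNorm (X * E)) ≤
              (specNorm X * specNorm E) / (1 - specNorm X * specNorm E) := by
            rw [div_le_div_iff₀ hdr hd]
            nlinarith
          calc (1 / (1 - specNorm (X * E))) * specNorm (X * E) * specNorm X
              = (specNorm (X * E) / (1 - specNorm (X * E))) * specNorm X := by ring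
            _ ≤ ((specNorm X * specNorm E) / (1 - specNorm X * specNorm E)) * specNorm X :=
                mul_le_mul_of_nonneg_right h1 (specNorm_nonneg' X)
            _ = specNorm X * (specNorm X * specNorm E) / (1 - specNorm X * specNorm E) := by
                ring
  refine ⟨hbound, fun hA => ?_⟩
  have hkey : specNorm A * specNorm X * specNorm E / specNorm A =
      specNorm X * specNorm E := by
    field_simp
  rw [hkey]
  rcases eq_or_lt_of_le (specNorm_nonneg' X) with h0 | hpos
  · have hz : specNorm (Y - X) / specNorm X = 0 := by rw [← h0, div_zero]
    rw [hz]
    exact div_nonneg ht0 hd.le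
  · rw [div_le_iff₀ hpos]
    calc specNorm (Y - X) ≤
        specNorm X * (specNorm X * specNorm E) / (1 - specNorm X * specNorm E) := hbound
      _ = specNorm X * specNorm E / (1 - specNorm X * specNorm E) * specNorm X := by ring
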